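/- Let L_α(s) = diag(e^{sα}, e^{s(ᾱ − α)}, e^{−sᾱ}) be a one-parameter loxodromic subgroup in the Siegel model (α ∈ ℂ*, |Re α| part nonzero). The orbit s ↦ L_α(s)·p of a boundary point p with Heisenberg coordinates [z, t] is horizontal (tangent to the contact distribution at every point, equivalently ⟨γ'(s), γ(s)⟩ = 0 for the standard lifts) if and only if t = 3 |z|² Im(α)/Re(α). -/

import Mathlib

open Matrix Complex

noncomputable section

abbrev C3 := Fin 3 → ℂ

/-- Hermitian form ⟨X,Y⟩ = Yᴴ J X. -/
def herm (J : Matrix (Fin 3) (Fin 3) ℂ) (X Y : C3) : ℂ :=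
  star Y ⬝ᵥ J.mulVec X

/-- The Hermitian matrix of the Siegel model. -/
def HS : Matrix (Fin 3) (Fin 3) ℂ := !![0,0,1;0,2,0;1,0,0]

/-- Standard null lift of the Heisenberg point [z,t]. -/
def heisPt (z : ℂ) (t : ℝ) : C3 := ![(-(Complex.normSq z) : ℝ) + (t : ℂ) * Complex.I, z, 1]

/-- The one-parameter loxodromic subgroup L_α(s) = diag(e^{sα}, e^{s(ᾱ−α)}, e^{−sᾱ}). -/
def Lmat (α : ℂ) (s : ℝ) : Matrix (Fin 3) (Fin 3) ℂ :=
  Matrix.diagonal ![Complex.exp ((s : ℂ) * α),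
    Complex.exp ((s : ℂ) * ((starRingEnd ℂ) α - α)),
    Complex.exp (-(s : ℂ) * (starRingEnd ℂ) α)]

lemma dexp (c p : ℂ) (s : ℝ) :
    deriv (fun s' : ℝ => Complex.exp ((s' : ℂ) * c) * p) s
      = c * Complex.exp ((s : ℂ) * c) * p := by
  have h : HasDerivAt (fun w : ℂ => Complex.exp (w * c)) (Complex.exp ((s:ℂ) * c) * c) (s:ℂ) := by
    simpa using ((hasDerivAt_id ((s:ℂ))).mul_const c).cexp
  have h2 := (h.comp_ofReal).mul_const p
  rw [h2.deriv]; ring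

lemma hermval (X Y : C3) :
    herm HS X Y = (starRingEnd ℂ) (Y 0) * X 2 + 2 * (starRingEnd ℂ) (Y 1) * X 1
      + (starRingEnd ℂ) (Y 2) * X 0 := by
  simp [herm, HS, Matrix.mulVec, dotProduct, Fin.sum_univ_three, Matrix.vecHead, Matrix.vecTail]
  ring

lemma key (α : ℂ) (z : ℂ) (t : ℝ) (s : ℝ) :
    herm HS (fun i => deriv (fun s' : ℝ => (Lmat α s').mulVec (heisPt z t) i) s)
        ((Lmat α s).mulVec (heisPt z t))
      = Complex.I * (2 * t * α.re - 6 * Complex.normSq z * α.im) := by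
  set A := (starRingEnd ℂ) α with hA
  have e0 : (fun s' : ℝ => (Lmat α s').mulVec (heisPt z t) 0)
      = fun s' : ℝ => Complex.exp ((s':ℂ) * α) * (((-(Complex.normSq z) : ℝ) : ℂ) + (t : ℂ) * Complex.I) := by
    funext s'; simp [Lmat, heisPt, Matrix.mulVec_diagonal]
  have e1 : (fun s' : ℝ => (Lmat α s').mulVec (heisPt z t) 1)
      = fun s' : ℝ => Complex.exp ((s':ℂ) * (A - α)) * z := by
    funext s'; simp [Lmat, heisPt, Matrix.mulVec_diagonal, hA]
  have e2 : (fun s' : ℝ => (Lmat α s').mulVec (heisPt z t) 2)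
      = fun s' : ℝ => Complex.exp ((s':ℂ) * (-A)) * 1 := by
    funext s'; simp [Lmat, heisPt, Matrix.mulVec_diagonal, hA]
  rw [hermval]
  have g0 : (Lmat α s).mulVec (heisPt z t) 0
      = Complex.exp ((s:ℂ) * α) * (((-(Complex.normSq z) : ℝ) : ℂ) + (t : ℂ) * Complex.I) :=
    congrFun e0 s
  have g1 : (Lmat α s).mulVec (heisPt z t) 1 = Complex.exp ((s:ℂ) * (A - α)) * z :=
    congrFun e1 s
  have g2 : (Lmat α s).mulVec (heisPt z t) 2 = Complex.exp ((s:ℂ) * (-A)) * 1 :=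
    congrFun e2 s
  have d0 : deriv (fun s' : ℝ => (Lmat α s').mulVec (heisPt z t) 0) s
      = α * Complex.exp ((s:ℂ) * α) * (((-(Complex.normSq z) : ℝ) : ℂ) + (t : ℂ) * Complex.I) := by
    rw [e0, dexp]
  have d1 : deriv (fun s' : ℝ => (Lmat α s').mulVec (heisPt z t) 1) s
      = (A - α) * Complex.exp ((s:ℂ) * (A - α)) * z := by rw [e1, dexp]
  have d2 : deriv (fun s' : ℝ => (Lmat α s').mulVec (heisPt z t) 2) s
      = (-A) * Complex.exp ((s:ℂ) * (-A)) * 1 := by rw [e2, dexp]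
  rw [g0, g1, g2, d0, d1, d2]
  have c0 : (starRingEnd ℂ) (Complex.exp ((s:ℂ) * α)) = Complex.exp ((s:ℂ) * A) := by
    rw [← Complex.exp_conj]; simp [hA]
  have c1 : (starRingEnd ℂ) (Complex.exp ((s:ℂ) * (A - α))) = Complex.exp ((s:ℂ) * (α - A)) := by
    rw [← Complex.exp_conj]; simp [hA]
  have c2 : (starRingEnd ℂ) (Complex.exp ((s:ℂ) * (-A))) = Complex.exp ((s:ℂ) * (-α)) := by
    rw [← Complex.exp_conj]; simp [hA]
  simp only [_root_.map_mul, map_add, _root_.map_one, map_neg, c0, c1, c2, Complex.conj_ofReal, Complex.conj_I]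
  have m0 : Complex.exp ((s:ℂ) * A) * Complex.exp ((s:ℂ) * (-A)) = 1 := by
    rw [← Complex.exp_add, show (s:ℂ) * A + (s:ℂ) * (-A) = 0 by ring, Complex.exp_zero]
  have m1 : Complex.exp ((s:ℂ) * (α - A)) * Complex.exp ((s:ℂ) * (A - α)) = 1 := by
    rw [← Complex.exp_add, show (s:ℂ) * (α - A) + (s:ℂ) * (A - α) = 0 by ring, Complex.exp_zero]
  have m2 : Complex.exp ((s:ℂ) * (-α)) * Complex.exp ((s:ℂ) * α) = 1 := by
    rw [← Complex.exp_add, show (s:ℂ) * (-α) + (s:ℂ) * α = 0 by ring, Complex.exp_zero]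
  have hz : (starRingEnd ℂ) z * z = (Complex.normSq z : ℂ) := by
    rw [mul_comm, Complex.mul_conj]
  have hα' : A = (α.re : ℂ) - (α.im : ℂ) * Complex.I := by
    simp [hA, Complex.ext_iff]
  have hα2 : α = (α.re : ℂ) + (α.im : ℂ) * Complex.I := by
    simp [Complex.ext_iff]
  calc Complex.exp ((s:ℂ)*A) * (((-(Complex.normSq z) : ℝ) : ℂ) + (t:ℂ) * -Complex.I) *
        ((-A) * Complex.exp ((s:ℂ) * (-A)) * 1)
      + 2 * (Complex.exp ((s:ℂ)*(α - A)) * (starRingEnd ℂ) z) * ((A - α) * Complex.exp ((s:ℂ)*(A - α)) * z)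
      + Complex.exp ((s:ℂ)*(-α)) * 1 * (α * Complex.exp ((s:ℂ)*α) *
          (((-(Complex.normSq z) : ℝ) : ℂ) + (t:ℂ) * Complex.I))
      = (Complex.exp ((s:ℂ)*A) * Complex.exp ((s:ℂ)*(-A))) *
          ((((-(Complex.normSq z) : ℝ) : ℂ) - (t:ℂ) * Complex.I) * (-A))
        + (Complex.exp ((s:ℂ)*(α - A)) * Complex.exp ((s:ℂ)*(A - α))) *
          (2 * ((starRingEnd ℂ) z * z) * (A - α))
        + (Complex.exp ((s:ℂ)*(-α)) * Complex.exp ((s:ℂ)*α)) *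
          (α * (((-(Complex.normSq z) : ℝ) : ℂ) + (t:ℂ) * Complex.I)) := by ring
    _ = Complex.I * (2 * t * α.re - 6 * Complex.normSq z * α.im) := by
        rw [m0, m1, m2, hz, hα', hα2]
        push_cast
        ring_nf
        simp [Complex.I_sq]
        ring

/-- The orbit s ↦ L_α(s)·p of the boundary point p = [z,t] is horizontal, i.e.
⟨γ'(s), γ(s)⟩ = 0 for all s (with standard lifts), iff t = 3|z|² Im(α)/Re(α). -/
theorem stmt18 (α : ℂ) (hα : α.re ≠ 0) (z : ℂ) (t : ℝ) :
    (∀ s : ℝ,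
      herm HS (fun i => deriv (fun s' : ℝ => (Lmat α s').mulVec (heisPt z t) i) s)
        ((Lmat α s).mulVec (heisPt z t)) = 0) ↔
      t = 3 * Complex.normSq z * α.im / α.re := by
  constructor
  · intro h
    have h0 := h 0
    rw [key] at h0
    rcases mul_eq_zero.mp h0 with h' | h'
    · exact absurd h' Complex.I_ne_zero
    · have hr : 2 * t * α.re - 6 * Complex.normSq z * α.im = 0 := by
        have h2 : ((2 * t * α.re - 6 * Complex.normSq z * α.im : ℝ) : ℂ) = 0 := by
          push_cast; exact h'
        exact_mod_cast h2
      field_simp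
      linarith
  · intro h s
    rw [key]
    have hr : 2 * t * α.re - 6 * Complex.normSq z * α.im = 0 := by
      rw [h]; field_simp; ring
    have h2 : ((2 * t * α.re - 6 * Complex.normSq z * α.im : ℝ) : ℂ) = 0 := by
      rw [hr]; simp
    push_cast at h2
    rw [h2, mul_zero]
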